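/- Let ω > 1, T = π/(2ω) + π/2, and extend v to ℝ₊ by v(t + kT) = (−ω)^k cos(ωt) for t ∈ [0, π/(2ω)] and v(t + kT) = (−ω)^{k+1} sin(t − π/(2ω)) for t ∈ [π/(2ω), T], k ∈ ℕ. Then v solves v'' + α(t)v = 0 on ℝ₊ with α extended T-periodically, and v is unbounded: sup over t ≥ 0 of |v(t)| = +∞ (indeed |v(kT)| = ω^k). -/

import Mathlib

open MeasureTheory Real Set

private lemma aux_local (v g g' : ℝ → ℝ) (t c : ℝ) (U : Set ℝ) (hU : IsOpen U) (ht : t ∈ U)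
    (heq : Set.EqOn v g U) (hg : ∀ s ∈ U, HasDerivAt g (g' s) s)
    (hg' : HasDerivAt g' c t) : HasDerivAt (deriv v) c t := by
  have hderiveq : deriv v =ᶠ[nhds t] g' := by
    filter_upwards [hU.mem_nhds ht] with s hs
    have hv : HasDerivAt v (g' s) s :=
      (hg s hs).congr_of_eventuallyEq
        (Filter.eventually_of_mem (hU.mem_nhds hs) fun x hx => heq hx)
    exact hv.deriv
  exact hg'.congr_of_eventuallyEq hderiveq

theorem stmt_10 (ω : ℝ) (hω : 1 < ω)
    (T : ℝ) (hT : T = π / (2 * ω) + π / 2)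
    (v : ℝ → ℝ)
    (hv1 : ∀ k : ℕ, ∀ t ∈ Icc 0 (π / (2 * ω)),
      v (t + k * T) = (-ω) ^ k * Real.cos (ω * t))
    (hv2 : ∀ k : ℕ, ∀ t ∈ Icc (π / (2 * ω)) T,
      v (t + k * T) = (-ω) ^ (k + 1) * Real.sin (t - π / (2 * ω)))
    (α : ℝ → ℝ)
    (hαper : ∀ t, α (t + T) = α t)
    (hα1 : ∀ t ∈ Ioo 0 (π / (2 * ω)), α t = ω ^ 2)
    (hα2 : ∀ t ∈ Ioo (π / (2 * ω)) T, α t = 1) :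
    (∀ᵐ t ∂volume, 0 < t → HasDerivAt (deriv v) (-(α t * v t)) t) ∧
    (∀ k : ℕ, |v (k * T)| = ω ^ k) ∧
    ¬ ∃ M : ℝ, ∀ t : ℝ, 0 ≤ t → |v t| ≤ M := by
  have hπ := Real.pi_pos
  have hω0 : (0:ℝ) < ω := by linarith
  set a : ℝ := π / (2 * ω) with ha_def
  have ha : 0 < a := by positivity
  have haT : a < T := by rw [hT]; linarith
  have hTpos : 0 < T := lt_trans ha haT
  -- periodicity of α
  have hαper' : ∀ (k : ℕ) (s : ℝ), α (s + k * T) = α s := by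
    intro k
    induction k with
    | zero => intro s; simp
    | succ n ih =>
      intro s
      have : s + (n + 1 : ℕ) * T = (s + n * T) + T := by push_cast; ring
      rw [this, hαper, ih]
  -- Part 2
  have part2 : ∀ k : ℕ, |v (k * T)| = ω ^ k := by
    intro k
    have h0 : (0:ℝ) ∈ Icc 0 a := ⟨le_refl _, ha.le⟩
    have := hv1 k 0 h0
    rw [zero_add] at this
    rw [this]
    simp [abs_pow, abs_of_pos hω0, abs_mul]
  refine ⟨?_, part2, ?_⟩
  · -- a.e. ODE
    set B : Set ℝ :=
      (Set.range (fun k : ℕ => (k : ℝ) * T)) ∪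
      (Set.range (fun k : ℕ => (k : ℝ) * T + a)) with hB_def
    have hBc : B.Countable := (Set.countable_range _).union (Set.countable_range _)
    have hB0 : ∀ᵐ t ∂volume, t ∉ B :=
      measure_eq_zero_iff_ae_notMem.mp (hBc.measure_zero _)
    filter_upwards [hB0] with t htB htpos
    -- find k
    set k : ℕ := (⌊t / T⌋).toNat with hk_def
    have hdivpos : 0 < t / T := div_pos htpos hTpos
    have hcast : ((k : ℤ) : ℝ) = ((⌊t / T⌋ : ℤ) : ℝ) := by
      rw [hk_def, Int.toNat_of_nonneg (Int.floor_nonneg.mpr hdivpos.le)]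
    have hkcast : (k : ℝ) = ((⌊t / T⌋ : ℤ) : ℝ) := by exact_mod_cast hcast
    have hk1 : (k : ℝ) * T ≤ t := by
      rw [← le_div_iff₀ hTpos, hkcast]; exact Int.floor_le _
    have hk2 : t < ((k : ℝ) + 1) * T := by
      rw [← div_lt_iff₀ hTpos, hkcast]
      exact_mod_cast Int.lt_floor_add_one (t / T)
    set b : ℝ := (k : ℝ) * T with hb_def
    have hne1 : t ≠ b := fun h => htB (Or.inl ⟨k, h.symm⟩)
    have hne2 : t ≠ b + a := fun h => htB (Or.inr ⟨k, h.symm⟩)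
    have hbt : b < t := hk1.lt_of_ne fun h => hne1 h.symm
    by_cases hcase : t < b + a
    · -- cos branch
      set c : ℝ := (-ω) ^ k with hc_def
      have ht1 : t ∈ Ioo b (b + a) := ⟨hbt, hcase⟩
      have heq : Set.EqOn v (fun s => c * Real.cos (ω * (s - b))) (Ioo b (b + a)) := by
        intro s hs
        have hmem : s - b ∈ Icc 0 a := ⟨by linarith [hs.1], by linarith [hs.2]⟩
        have := hv1 k (s - b) hmem
        rw [show s - b + (k : ℝ) * T = s by rw [← hb_def]; ring] at this
        exact this
      have hαt : α t = ω ^ 2 := by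
        have h := hαper' k (t - b)
        rw [show t - b + (k : ℝ) * T = t by rw [← hb_def]; ring] at h
        rw [h]
        exact hα1 (t - b) ⟨by linarith, by linarith⟩
      have hvt : v t = c * Real.cos (ω * (t - b)) := heq ht1
      rw [hαt, hvt]
      refine aux_local v (fun s => c * Real.cos (ω * (s - b)))
        (fun s => -(c * ω) * Real.sin (ω * (s - b)))
        t _ (Ioo b (b + a)) isOpen_Ioo ht1 heq ?_ ?_
      · intro s _
        have hin : HasDerivAt (fun s : ℝ => ω * (s - b)) ω s := by
          simpa using ((hasDerivAt_id s).sub_const b).const_mul ω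
        have := ((Real.hasDerivAt_cos (ω * (s - b))).comp s hin).const_mul c
        exact this.congr_deriv (by ring)
      · have hin : HasDerivAt (fun s : ℝ => ω * (s - b)) ω t := by
          simpa using ((hasDerivAt_id t).sub_const b).const_mul ω
        have := ((Real.hasDerivAt_sin (ω * (t - b))).comp t hin).const_mul (-(c * ω))
        exact this.congr_deriv (by ring)
    · -- sin branch
      push_neg at hcase
      set d : ℝ := (-ω) ^ (k + 1) with hd_def
      have hbat : b + a < t := hcase.lt_of_ne fun h => hne2 h.symm
      have ht2 : t ∈ Ioo (b + a) (b + T) := ⟨hbat, by rw [hb_def]; linarith [hk2]⟩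
      have heq : Set.EqOn v (fun s => d * Real.sin (s - b - a)) (Ioo (b + a) (b + T)) := by
        intro s hs
        have hmem : s - b ∈ Icc a T := ⟨by linarith [hs.1], by linarith [hs.2]⟩
        have := hv2 k (s - b) hmem
        rw [show s - b + (k : ℝ) * T = s by rw [← hb_def]; ring] at this
        exact this
      have hαt : α t = 1 := by
        have h := hαper' k (t - b)
        rw [show t - b + (k : ℝ) * T = t by rw [← hb_def]; ring] at h
        rw [h]
        exact hα2 (t - b) ⟨by linarith, by linarith [ht2.2]⟩
      have hvt : v t = d * Real.sin (t - b - a) := heq ht2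
      rw [hαt, hvt]
      refine aux_local v (fun s => d * Real.sin (s - b - a))
        (fun s => d * Real.cos (s - b - a))
        t _ (Ioo (b + a) (b + T)) isOpen_Ioo ht2 heq ?_ ?_
      · intro s _
        have hin : HasDerivAt (fun s : ℝ => s - b - a) 1 s := by
          simpa using ((hasDerivAt_id s).sub_const b).sub_const a
        have := ((Real.hasDerivAt_sin (s - b - a)).comp s hin).const_mul d
        exact this.congr_deriv (by ring)
      · have hin : HasDerivAt (fun s : ℝ => s - b - a) 1 t := by
          simpa using ((hasDerivAt_id t).sub_const b).sub_const a
        have := ((Real.hasDerivAt_cos (t - b - a)).comp t hin).const_mul d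
        exact this.congr_deriv (by ring)
  · -- unboundedness
    rintro ⟨M, hM⟩
    obtain ⟨n, hn⟩ := pow_unbounded_of_one_lt M hω
    have h1 := hM ((n : ℝ) * T) (by positivity)
    rw [part2 n] at h1
    linarith
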